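/- On the 3-dimensional complex vector space with basis {x,y,z}, the anticommutative bilinear bracket determined by [x,y] = y, [x,z] = y+z, [y,z] = x, together with the skew-symmetric bilinear form ω determined by ω(x,y) = 0, ω(x,z) = 0, ω(y,z) = 2, satisfies the ω-Jacobi identity; this structure B is a nontrivial (non-Lie) ω-Lie algebra. -/
import Mathlib


/-- The bracket of `B` on `ℂ³`: the bilinear extension of `[x,y] = y`,
`[x,z] = y + z`, `[y,z] = x` on the standard basis `x = e₀, y = e₁, z = e₂`. -/
def brB (u v : Fin 3 → ℂ) : Fin 3 → ℂ :=
  ![u 1 * v 2 - u 2 * v 1, (u 0 * v 1 - u 1 * v 0) + (u 0 * v 2 - u 2 * v 0),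
    u 0 * v 2 - u 2 * v 0]

/-- The form of `B`: the bilinear extension of `ω(x,y) = ω(x,z) = 0`, `ω(y,z) = 2`. -/
def omB (u v : Fin 3 → ℂ) : ℂ := 2 * (u 1 * v 2 - u 2 * v 1)

/-- On `ℂ³` with basis `x = e₀, y = e₁, z = e₂`, the anticommutative bilinear bracket
determined by `[x,y] = y`, `[x,z] = y + z`, `[y,z] = x` and the skew-symmetric
bilinear form determined by `ω(x,y) = ω(x,z) = 0`, `ω(y,z) = 2` satisfy the ω-Jacobi
identity, and `ω` is not identically zero: `B` is a nontrivial (non-Lie) ω-Lie algebra. -/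
theorem B_is_nontrivial_omega_lie :
    (∀ (a b : ℂ) (u v w : Fin 3 → ℂ),
        brB (a • u + b • v) w = a • brB u w + b • brB v w) ∧
    (∀ (a b : ℂ) (u v w : Fin 3 → ℂ),
        brB w (a • u + b • v) = a • brB w u + b • brB w v) ∧
    (∀ (a b : ℂ) (u v w : Fin 3 → ℂ),
        omB (a • u + b • v) w = a * omB u w + b * omB v w) ∧
    (∀ (a b : ℂ) (u v w : Fin 3 → ℂ),
        omB w (a • u + b • v) = a * omB w u + b * omB w v) ∧
    brB ![1,0,0] ![0,1,0] = ![0,1,0] ∧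
    brB ![1,0,0] ![0,0,1] = ![0,1,0] + ![0,0,1] ∧
    brB ![0,1,0] ![0,0,1] = ![1,0,0] ∧
    omB ![1,0,0] ![0,1,0] = 0 ∧
    omB ![1,0,0] ![0,0,1] = 0 ∧
    omB ![0,1,0] ![0,0,1] = 2 ∧
    (∀ u v : Fin 3 → ℂ, brB u v = - brB v u) ∧
    (∀ u v : Fin 3 → ℂ, omB u v = - omB v u) ∧
    (∀ u v w : Fin 3 → ℂ,
        brB (brB u v) w + brB (brB v w) u + brB (brB w u) v
          = omB u v • w + omB v w • u + omB w u • v) ∧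
    ¬ (∀ u v : Fin 3 → ℂ, omB u v = 0) := by
  refine ⟨?_, ?_, ?_, ?_, ?_, ?_, ?_, ?_, ?_, ?_, ?_, ?_, ?_, ?_⟩
  · intro a b u v w; funext i; fin_cases i <;>
      simp [brB, Matrix.cons_val_zero, Matrix.cons_val_one] <;> ring
  · intro a b u v w; funext i; fin_cases i <;>
      simp [brB, Matrix.cons_val_zero, Matrix.cons_val_one] <;> ring
  · intro a b u v w; simp [omB]; ring
  · intro a b u v w; simp [omB]; ring
  · funext i; fin_cases i <;> simp [brB]
  · funext i; fin_cases i <;> simp [brB]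
  · funext i; fin_cases i <;> simp [brB]
  · simp [omB]
  · simp [omB]
  · simp [omB]
  · intro u v; funext i; fin_cases i <;> simp [brB] <;> ring
  · intro u v; simp [omB]; ring
  · intro u v w; funext i; fin_cases i <;> simp [brB, omB] <;> ring
  · intro h; have := h ![0,1,0] ![0,0,1]; simp [omB] at this
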